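/- Let the parameters of H(m,1,n) satisfy the restrictions, let ρ be a C-representation of H(m,1,n) on a finite-dimensional ℂ-vector space V, and let e ∈ V be a nonzero vector with ρ(J_i)e = a_i·e for all i = 1, …, n. Then for each i = 1, …, n there exist k ∈ {1,…,m} and an integer z with 1−i ≤ z ≤ i−1 such that a_i = v_k·q^{2z}. -/
import Mathlib


open Classical

noncomputable section

namespace CHA

abbrev Gen (n : ℕ) := Unit ⊕ Fin (n - 1)
def fτ (n : ℕ) : FreeAlgebra ℂ (Gen n) := FreeAlgebra.ι ℂ (Sum.inl ())
def fσ (n : ℕ) (i : Fin (n - 1)) : FreeAlgebra ℂ (Gen n) := FreeAlgebra.ι ℂ (Sum.inr i)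
inductive Rel (m n : ℕ) (q : ℂ) (v : Fin m → ℂ) :
    FreeAlgebra ℂ (Gen n) → FreeAlgebra ℂ (Gen n) → Prop
  | braid (i j : Fin (n - 1)) (hij : (i : ℕ) + 1 = (j : ℕ)) :
      Rel m n q v (fσ n i * fσ n j * fσ n i) (fσ n j * fσ n i * fσ n j)
  | comm (i j : Fin (n - 1)) (hij : (i : ℕ) + 1 < (j : ℕ)) :
      Rel m n q v (fσ n i * fσ n j) (fσ n j * fσ n i)
  | quad (i : Fin (n - 1)) :
      Rel m n q v (fσ n i * fσ n i) ((q - q⁻¹) • fσ n i + 1)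
  | reflection (i : Fin (n - 1)) (hi : (i : ℕ) = 0) :
      Rel m n q v (fτ n * fσ n i * (fτ n * fσ n i)) (fσ n i * fτ n * (fσ n i * fτ n))
  | taucomm (i : Fin (n - 1)) (hi : 0 < (i : ℕ)) :
      Rel m n q v (fτ n * fσ n i) (fσ n i * fτ n)
  | cyclotomic :
      Rel m n q v ((List.ofFn fun k : Fin m =>
        fτ n - algebraMap ℂ (FreeAlgebra ℂ (Gen n)) (v k)).prod) 0
abbrev Hecke (m n : ℕ) (q : ℂ) (v : Fin m → ℂ) := RingQuot (Rel m n q v)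
def τgen (m n : ℕ) (q : ℂ) (v : Fin m → ℂ) : Hecke m n q v :=
  RingQuot.mkAlgHom ℂ (Rel m n q v) (fτ n)
def σgen (m n : ℕ) (q : ℂ) (v : Fin m → ℂ) (i : Fin (n - 1)) : Hecke m n q v :=
  RingQuot.mkAlgHom ℂ (Rel m n q v) (fσ n i)
def σN (m n : ℕ) (q : ℂ) (v : Fin m → ℂ) (k : ℕ) : Hecke m n q v :=
  if h : k < n - 1 then σgen m n q v ⟨k, h⟩ else 1
def JMn (m n : ℕ) (q : ℂ) (v : Fin m → ℂ) : ℕ → Hecke m n q v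
  | 0 => τgen m n q v
  | k + 1 => σN m n q v k * JMn m n q v k * σN m n q v k
def JM (m n : ℕ) (q : ℂ) (v : Fin m → ℂ) (i : Fin n) : Hecke m n q v :=
  JMn m n q v i.val
def Restrictions (m n : ℕ) (q : ℂ) (v : Fin m → ℂ) : Prop :=
  (∀ N : ℕ, 1 ≤ N → N < n → (∑ j ∈ Finset.range (N + 1), q ^ (2 * j)) ≠ 0) ∧
  (∀ j k : Fin m, j ≠ k → ∀ i : ℤ, -(n : ℤ) < i → i < (n : ℤ) → q ^ (2 * i) * v j ≠ v k) ∧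
  (∀ j, v j ≠ 0)

section Rep

variable {m n : ℕ} {q : ℂ} {v : Fin m → ℂ}
variable {V : Type*} [AddCommGroup V] [Module ℂ V]

/-- A linear operator is diagonalizable iff its eigenspaces span. -/
def Diagonalizable (f : Module.End ℂ V) : Prop := (⨆ c : ℂ, f.eigenspace c) = ⊤

/-- A subspace is invariant under a set of operators. -/
def InvariantUnder (S : Set (Module.End ℂ V)) (p : Submodule ℂ V) : Prop :=
  ∀ T ∈ S, ∀ x ∈ p, T x ∈ p

/-- `V` is completely reducible under the (sub)algebra generated by the operators in `S`:
every `S`-invariant subspace has an `S`-invariant complement. -/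
def CompletelyReducible (S : Set (Module.End ℂ V)) : Prop :=
  ∀ p : Submodule ℂ V, InvariantUnder S p → ∃ p', InvariantUnder S p' ∧ IsCompl p p'

/-- A `C`-representation of `H(m,1,n)`: all Jucys–Murphy operators are diagonalizable and,
for each `i = 1,…,n−1`, the action of the subalgebra generated by `J_i`, `J_{i+1}`, `σ_i`
is completely reducible. -/
def IsCRep (ρ : Hecke m n q v →ₐ[ℂ] Module.End ℂ V) : Prop :=
  (∀ i : Fin n, Diagonalizable (ρ (JM m n q v i))) ∧
  ∀ i : Fin (n - 1),
    CompletelyReducible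
      {ρ (JM m n q v ⟨i.val, by have := i.isLt; omega⟩),
       ρ (JM m n q v ⟨i.val + 1, by have := i.isLt; omega⟩),
       ρ (σgen m n q v i)}

end Rep

section ProofAux

variable {m n : ℕ} {q : ℂ} {v : Fin m → ℂ}

lemma rel_eq {x y : FreeAlgebra ℂ (Gen n)} (h : Rel m n q v x y) :
    RingQuot.mkAlgHom ℂ (Rel m n q v) x = RingQuot.mkAlgHom ℂ (Rel m n q v) y :=
  RingQuot.mkAlgHom_rel ℂ h

lemma quad_eq (i : Fin (n - 1)) :
    σgen m n q v i * σgen m n q v i = (q - q⁻¹) • σgen m n q v i + 1 := by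
  have h := rel_eq (Rel.quad (m := m) (q := q) (v := v) i)
  simpa [σgen, map_mul, map_add, map_smul, map_one] using h

lemma taucomm_eq (i : Fin (n - 1)) (hi : 0 < (i : ℕ)) :
    τgen m n q v * σgen m n q v i = σgen m n q v i * τgen m n q v := by
  have h := rel_eq (Rel.taucomm (m := m) (q := q) (v := v) i hi)
  simpa [τgen, σgen, map_mul] using h

lemma comm_eq (i j : Fin (n - 1)) (hij : (i : ℕ) + 1 < (j : ℕ)) :
    σgen m n q v i * σgen m n q v j = σgen m n q v j * σgen m n q v i := by
  have h := rel_eq (Rel.comm (m := m) (q := q) (v := v) i j hij)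
  simpa [σgen, map_mul] using h

lemma σ_comm_JMn (i : Fin (n - 1)) : ∀ k : ℕ, k < (i : ℕ) →
    σgen m n q v i * JMn m n q v k = JMn m n q v k * σgen m n q v i := by
  intro k
  induction k with
  | zero =>
    intro hk
    exact (taucomm_eq i hk).symm
  | succ k ih =>
    intro hk
    have hk' : k < (i : ℕ) := Nat.lt_of_succ_lt hk
    have hkn : k < n - 1 := by have := i.isLt; omega
    have hσ : σN m n q v k = σgen m n q v ⟨k, hkn⟩ := dif_pos hkn
    set s := σgen m n q v i
    set t := σgen m n q v ⟨k, hkn⟩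
    set J := JMn m n q v k
    have hst : s * t = t * s := (comm_eq ⟨k, hkn⟩ i hk).symm
    have hJs : s * J = J * s := ih hk'
    show s * (σN m n q v k * J * σN m n q v k) = σN m n q v k * J * σN m n q v k * s
    rw [hσ]
    calc s * (t * J * t) = s * t * J * t := by rw [← mul_assoc, ← mul_assoc]
      _ = t * s * J * t := by rw [hst]
      _ = t * (s * J) * t := by rw [mul_assoc t s J]
      _ = t * (J * s) * t := by rw [hJs]
      _ = t * J * (s * t) := by rw [mul_assoc, mul_assoc, mul_assoc]
      _ = t * J * (t * s) := by rw [hst]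
      _ = t * J * t * s := by rw [← mul_assoc]

lemma eig_scalar {V : Type*} [AddCommGroup V] [Module ℂ V] {e : V} (he : e ≠ 0)
    {x y : ℂ} (h : x • e = y • e) : x = y := by
  by_contra hxy
  have h0 : (x - y) • e = 0 := by rw [sub_smul, h, sub_self]
  rcases smul_eq_zero.mp h0 with h1 | h1
  · exact hxy (sub_eq_zero.mp h1)
  · exact he h1

lemma prod_eig {V : Type*} [AddCommGroup V] [Module ℂ V]
    (f : Module.End ℂ V) (e : V) (b : ℂ) (hf : f e = b • e) :
    ∀ cs : List ℂ, ((cs.map fun c => f - algebraMap ℂ (Module.End ℂ V) c).prod) e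
      = (cs.map fun c => b - c).prod • e := by
  intro cs
  induction cs with
  | nil => simp
  | cons c cs ih =>
    simp only [List.map_cons, List.prod_cons, Module.End.mul_apply, ih, map_smul,
      LinearMap.sub_apply, hf, Module.algebraMap_end_apply, smul_sub]
    rw [smul_smul, smul_smul, ← sub_smul, ← mul_sub, mul_comm]

lemma key {V : Type*} [AddCommGroup V] [Module ℂ V] (hq : q ≠ 0)
    (ρ : Hecke m n q v →ₐ[ℂ] Module.End ℂ V) :
    ∀ i : ℕ, ∀ e : V, e ≠ 0 → ∀ b : ℕ → ℂ,
      (∀ k, k ≤ i → ρ (JMn m n q v k) e = b k • e) →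
      ∃ (k : Fin m) (z : ℤ), -(i : ℤ) ≤ z ∧ z ≤ (i : ℤ) ∧ b i = v k * q ^ (2 * z) := by
  intro i
  induction i with
  | zero =>
    intro e he b hb
    have hτ : ρ (τgen m n q v) e = b 0 • e := hb 0 le_rfl
    have hc1 : (List.ofFn fun k : Fin m =>
        τgen m n q v - algebraMap ℂ (Hecke m n q v) (v k)).prod = 0 := by
      have h := rel_eq (Rel.cyclotomic (m := m) (n := n) (q := q) (v := v))
      rw [map_list_prod, map_zero] at h
      rw [← h, List.map_ofFn]
      have hfun : (⇑(RingQuot.mkAlgHom ℂ (Rel m n q v)) ∘ fun k : Fin m =>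
          fτ n - algebraMap ℂ (FreeAlgebra ℂ (Gen n)) (v k))
          = fun k : Fin m => τgen m n q v - algebraMap ℂ (Hecke m n q v) (v k) := by
        funext k
        simp [τgen, map_sub, AlgHom.commutes]
      rw [hfun]
    have hc2 : (List.ofFn fun k : Fin m =>
        ρ (τgen m n q v) - algebraMap ℂ (Module.End ℂ V) (v k)).prod = 0 := by
      have h := congrArg ρ hc1
      rw [map_list_prod, map_zero] at h
      rw [← h, List.map_ofFn]
      have hfun : (⇑ρ ∘ fun k : Fin m => τgen m n q v - algebraMap ℂ (Hecke m n q v) (v k))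
          = fun k : Fin m => ρ (τgen m n q v) - algebraMap ℂ (Module.End ℂ V) (v k) := by
        funext k
        simp [map_sub, AlgHom.commutes]
      rw [hfun]
    have hofn : (List.ofFn fun k : Fin m =>
        ρ (τgen m n q v) - algebraMap ℂ (Module.End ℂ V) (v k))
        = (List.ofFn v).map (fun c => ρ (τgen m n q v) - algebraMap ℂ (Module.End ℂ V) c) := by
      rw [List.map_ofFn]; rfl
    have hprod := prod_eig (ρ (τgen m n q v)) e (b 0) hτ (List.ofFn v)
    rw [← hofn, hc2] at hprod
    have h0' : ((List.ofFn v).map fun c => b 0 - c).prod = 0 := by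
      rcases smul_eq_zero.mp hprod.symm with h | h
      · exact h
      · exact absurd h he
    rw [List.map_ofFn, List.prod_ofFn] at h0'
    obtain ⟨k, -, hk⟩ := Finset.prod_eq_zero_iff.mp h0'
    refine ⟨k, 0, by norm_num, by norm_num, ?_⟩
    have hbv : b 0 = v k := by
      have := sub_eq_zero.mp hk
      simpa using this
    simp [hbv]
  | succ i ih =>
    intro e he b hb
    by_cases hni : i < n - 1
    · set I : Fin (n - 1) := ⟨i, hni⟩ with hI
      have hσN : σN m n q v i = σgen m n q v I := dif_pos hni
      set S : Module.End ℂ V := ρ (σgen m n q v I) with hS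
      set A : Module.End ℂ V := ρ (JMn m n q v i) with hA
      have hAe : A e = b i • e := hb i (Nat.le_succ i)
      have hBdef : ρ (JMn m n q v (i + 1)) = S * A * S := by
        show ρ (σN m n q v i * JMn m n q v i * σN m n q v i) = S * A * S
        rw [hσN, map_mul, map_mul]
      have hBe : S (A (S e)) = b (i + 1) • e := by
        have h := hb (i + 1) le_rfl
        rw [hBdef] at h
        simpa [Module.End.mul_apply] using h
      have hSS : ∀ x : V, S (S x) = (q - q⁻¹) • S x + x := by
        intro x
        have h := congrArg ρ (quad_eq (m := m) (q := q) (v := v) I)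
        rw [map_mul, map_add, map_smul, map_one] at h
        have h2 := LinearMap.ext_iff.mp h x
        simpa [Module.End.mul_apply, LinearMap.add_apply, LinearMap.smul_apply] using h2
      obtain ⟨k, z, hz1, hz2, hbi⟩ :=
        ih e he b (fun k hk => hb k (Nat.le_trans hk (Nat.le_succ i)))
      have hq2 : q ^ ((2 : ℤ)) = q * q := by
        rw [show (2 : ℤ) = 1 + 1 by norm_num, zpow_add₀ hq, zpow_one]
      by_cases hprop : ∃ c : ℂ, S e = c • e
      · obtain ⟨c, hc⟩ := hprop
        have hcc : c * c = (q - q⁻¹) * c + 1 := by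
          have h := hSS e
          rw [hc, map_smul, hc, smul_smul] at h
          apply eig_scalar he
          rw [h, smul_smul, add_smul, one_smul]
        have hb1 : b (i + 1) = c * c * b i := by
          apply eig_scalar he
          rw [← hBe, hc, map_smul, hAe, map_smul, map_smul, hc, smul_smul, smul_smul]
          congr 1
          ring
        have hfac : (c - q) * (c + q⁻¹) = 0 := by
          have hqq : q * q⁻¹ = 1 := mul_inv_cancel₀ hq
          linear_combination hcc - hqq
        rcases mul_eq_zero.mp hfac with hcq | hcq
        · have hcq' : c = q := by linear_combination hcq
          refine ⟨k, z + 1, by push_cast; omega, by push_cast; omega, ?_⟩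
          have hpow : q ^ (2 * (z + 1)) = q ^ (2 * z) * (q * q) := by
            rw [show 2 * (z + 1) = 2 * z + 2 by ring, zpow_add₀ hq, hq2]
          rw [hb1, hcq', hbi, hpow]
          ring
        · have hcq' : c = -q⁻¹ := by linear_combination hcq
          refine ⟨k, z - 1, by push_cast; omega, by push_cast; omega, ?_⟩
          have hpow : q ^ (2 * (z - 1)) = q ^ (2 * z) * (q⁻¹ * q⁻¹) := by
            rw [show 2 * (z - 1) = 2 * z + (-2) by ring, zpow_add₀ hq]
            congr 1
            rw [show (-2 : ℤ) = -(2 : ℤ) by norm_num, zpow_neg, hq2, mul_inv]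
          rw [hb1, hcq', hbi, hpow]
          ring
      · push_neg at hprop
        by_cases heq : b (i + 1) = b i
        · exact ⟨k, z, by push_cast; omega, by push_cast; omega, by rw [heq, hbi]⟩
        · have hbne : b i - b (i + 1) ≠ 0 :=
            sub_ne_zero.mpr (fun h => heq h.symm)
          set t : ℂ := (q - q⁻¹) * b (i + 1) / (b i - b (i + 1)) with htdef
          have ht : t * (b i - b (i + 1)) = (q - q⁻¹) * b (i + 1) :=
            div_mul_cancel₀ _ hbne
          have hASe : A (S e) = b (i + 1) • S e - ((q - q⁻¹) * b (i + 1)) • e := by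
            have h := hSS (A (S e))
            rw [hBe, map_smul, smul_smul] at h
            rw [eq_sub_iff_add_eq, h]
            exact add_comm _ _
          set E : V := S e + t • e with hEdef
          have hE0 : E ≠ 0 := by
            intro h
            apply hprop (-t)
            rw [neg_smul]
            exact eq_neg_of_add_eq_zero_left h
          have hAE : A E = b (i + 1) • E := by
            rw [hEdef, map_add, map_smul, hAe, hASe, smul_smul, smul_add, smul_smul]
            have hco : t * b i - (q - q⁻¹) * b (i + 1) = b (i + 1) * t := by
              linear_combination ht
            rw [← hco, sub_smul]
            abel
          have hcommv : ∀ k, k < i →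
              ρ (JMn m n q v k) (S e) = S (ρ (JMn m n q v k) e) := by
            intro k hk
            have h := congrArg ρ (σ_comm_JMn (m := m) (q := q) (v := v) I k hk)
            rw [map_mul, map_mul] at h
            have h2 := LinearMap.ext_iff.mp h e
            simpa [Module.End.mul_apply] using h2.symm
          set b' : ℕ → ℂ := fun k => if k = i then b (i + 1) else b k with hb'def
          have hb'e : ∀ k, k ≤ i → ρ (JMn m n q v k) E = b' k • E := by
            intro k hk
            rcases Nat.lt_or_ge k i with hki | hki
            · have hne : k ≠ i := Nat.ne_of_lt hki
              rw [hb'def]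
              simp only [if_neg hne]
              rw [hEdef, map_add, map_smul, hcommv k hki, hb k (Nat.le_trans hk (Nat.le_succ i)),
                map_smul, smul_add, smul_smul, smul_smul, mul_comm]
            · have hki' : k = i := Nat.le_antisymm hk hki
              subst hki'
              rw [hb'def]
              simp only [if_pos rfl]
              exact hAE
          obtain ⟨k', z', hz1', hz2', hbz'⟩ := ih E hE0 b' hb'e
          refine ⟨k', z', by push_cast; omega, by push_cast; omega, ?_⟩
          rw [hb'def] at hbz'
          simpa using hbz'
    · have hσN : σN m n q v i = 1 := dif_neg hni
      have hJ : JMn m n q v (i + 1) = JMn m n q v i := by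
        show σN m n q v i * JMn m n q v i * σN m n q v i = JMn m n q v i
        rw [hσN, one_mul, mul_one]
      have hbb : b (i + 1) = b i := by
        apply eig_scalar he
        rw [← hb (i + 1) le_rfl, hJ, hb i (Nat.le_succ i)]
      obtain ⟨k, z, hz1, hz2, hbi⟩ :=
        ih e he b (fun k hk => hb k (Nat.le_trans hk (Nat.le_succ i)))
      exact ⟨k, z, by push_cast; omega, by push_cast; omega, by rw [hbb, hbi]⟩

end ProofAux

/-- Proposition 3.4.  In a `C`-representation of `H(m,1,n)`, with
parameters satisfying the restrictions, the eigenvalue of `J_i` on a common eigenvector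
belongs to `{v_k q^{2z} : 1 ≤ k ≤ m, 1−i ≤ z ≤ i−1}` (1-based `i`; for `i : Fin n`
this reads `−i.val ≤ z ≤ i.val`). -/
theorem JM_spectrum_bound
    (m n : ℕ) (hm : 1 ≤ m) (hn : 1 ≤ n) (q : ℂ) (hq : q ≠ 0) (v : Fin m → ℂ)
    (hres : Restrictions m n q v)
    (V : Type*) [AddCommGroup V] [Module ℂ V] [FiniteDimensional ℂ V]
    (ρ : Hecke m n q v →ₐ[ℂ] Module.End ℂ V) (hρ : IsCRep ρ)
    (e : V) (he : e ≠ 0) (a : Fin n → ℂ)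
    (hev : ∀ i : Fin n, ρ (JM m n q v i) e = a i • e) :
    ∀ i : Fin n, ∃ (k : Fin m) (z : ℤ),
      -(i.val : ℤ) ≤ z ∧ z ≤ (i.val : ℤ) ∧ a i = v k * q ^ (2 * z) := by
  intro i
  have hb : ∀ k, k ≤ i.val →
      ρ (JMn m n q v k) e = (fun k => if h : k < n then a ⟨k, h⟩ else 0) k • e := by
    intro k hk
    have hkn : k < n := lt_of_le_of_lt hk i.isLt
    simp only [dif_pos hkn]
    exact hev ⟨k, hkn⟩
  obtain ⟨k, z, hz1, hz2, hbz⟩ := key hq ρ i.val e he _ hb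
  refine ⟨k, z, hz1, hz2, ?_⟩
  simp only [dif_pos i.isLt] at hbz
  simpa using hbz

end CHA
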